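/- For every τ ∈ A₀, every b ∈ I_τ and all z, z′ ∈ X, one has |z + b| ≥ √(5/4) and |1/(z + b) − 1/(z′ + b)| ≤ (4/5)·|z − z′|; in particular the system S_τ is uniformly contractive on X with contraction constant 4/5. -/

import Mathlib

open Complex Metric Filter Set
open scoped ENNReal NNReal Topology

noncomputable section

/-- The parameter space `A₀ = {u+iv : u ≥ 0, v ≥ 1}`. -/
def A0 : Set ℂ := {τ : ℂ | 0 ≤ τ.re ∧ 1 ≤ τ.im}

/-- The phase space `X = {z : |z - 1/2| ≤ 1/2}`. -/
def Xcl : Set ℂ := {z : ℂ | ‖z - 1/2‖ ≤ 1/2}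

/-- The alphabet `I_τ = {m + nτ : m, n ∈ ℕ₊}`. -/
def Itau (τ : ℂ) : Set ℂ := {b : ℂ | ∃ m n : ℕ+, b = ((m : ℕ) : ℂ) + ((n : ℕ) : ℂ) * τ}

/-- The generator `φ_b(z) = 1/(z+b)`. -/
def phi (b z : ℂ) : ℂ := 1 / (z + b)

lemma key_bound {τ : ℂ} (hτ : τ ∈ A0) {b : ℂ} (hb : b ∈ Itau τ) {w : ℂ} (hw : w ∈ Xcl) :
    Real.sqrt (5/4) ≤ ‖w + b‖ := by
  obtain ⟨m, n, rfl⟩ := hb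
  have hre : |w.re - 1/2| ≤ 1/2 := by
    have := Complex.abs_re_le_norm (w - 1/2)
    simpa [Complex.sub_re] using this.trans hw
  have him : |w.im| ≤ 1/2 := by
    have := Complex.abs_im_le_norm (w - 1/2)
    simpa [Complex.sub_im] using this.trans hw
  have hwre : 0 ≤ w.re := by
    have := abs_le.mp hre
    linarith [this.1]
  have hwim : -(1/2) ≤ w.im := (abs_le.mp him).1
  have hm : (1:ℝ) ≤ (m:ℕ) := by exact_mod_cast m.one_le
  have hn : (1:ℝ) ≤ (n:ℕ) := by exact_mod_cast n.one_le
  set a := w + (((m:ℕ):ℂ) + ((n:ℕ):ℂ) * τ) with ha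
  have hare : 1 ≤ a.re := by
    have : a.re = w.re + ((m:ℕ) + (n:ℕ) * τ.re) := by
      simp [ha, Complex.add_re, Complex.mul_re]
    rw [this]
    nlinarith [hτ.1, hτ.2]
  have haim : 1/2 ≤ a.im := by
    have : a.im = w.im + (n:ℕ) * τ.im := by
      simp [ha, Complex.add_im, Complex.mul_im]
    rw [this]
    nlinarith [hτ.2]
  have hsq : (5/4 : ℝ) ≤ ‖a‖^2 := by
    rw [Complex.sq_norm, Complex.normSq_apply]
    nlinarith
  calc Real.sqrt (5/4) ≤ Real.sqrt (‖a‖^2) := Real.sqrt_le_sqrt hsq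
    _ = ‖a‖ := Real.sqrt_sq (norm_nonneg _)

/-- Uniform contractivity of `S_τ` with contraction constant `4/5`. -/
theorem stmt1 :
    ∀ τ ∈ A0, ∀ b ∈ Itau τ, ∀ z ∈ Xcl, ∀ z' ∈ Xcl,
      Real.sqrt (5/4) ≤ ‖z + b‖ ∧
      ‖1 / (z + b) - 1 / (z' + b)‖ ≤ (4/5) * ‖z - z'‖ := by
  intro τ hτ b hb z hz z' hz'
  have h1 := key_bound hτ hb hz
  have h2 := key_bound hτ hb hz'
  refine ⟨h1, ?_⟩
  have hpos : (0:ℝ) < Real.sqrt (5/4) := Real.sqrt_pos.mpr (by norm_num)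
  have hz0 : z + b ≠ 0 := by
    intro h; rw [h, norm_zero] at h1; linarith
  have hz'0 : z' + b ≠ 0 := by
    intro h; rw [h, norm_zero] at h2; linarith
  have heq : 1 / (z + b) - 1 / (z' + b) = (z' - z) / ((z + b) * (z' + b)) := by
    field_simp
    ring
  rw [heq, norm_div, norm_mul]
  have hprod : (5/4 : ℝ) ≤ ‖z + b‖ * ‖z' + b‖ := by
    calc (5/4 : ℝ) = Real.sqrt (5/4) * Real.sqrt (5/4) := by
          rw [Real.mul_self_sqrt (by norm_num)]
      _ ≤ ‖z + b‖ * ‖z' + b‖ := mul_le_mul h1 h2 (le_of_lt hpos) (norm_nonneg _)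
  have h54 : (0:ℝ) < ‖z + b‖ * ‖z' + b‖ := lt_of_lt_of_le (by norm_num) hprod
  rw [div_le_iff₀ h54]
  have : ‖z' - z‖ = ‖z - z'‖ := by rw [← norm_neg]; ring_nf
  rw [this]
  nlinarith [norm_nonneg (z - z')]
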